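/- For any topological space X, the map σ : A(K(X)) → K(A(X)) defined by σ(𝒜) = {A ∈ A(X) | ∀K ∈ 𝒜, A ∩ K ≠ ∅} is well-defined (each σ(𝒜) is compact saturated in A(X)), satisfies σ⁻¹(□◇U) = ◇□U for every open U ⊆ X, and is a topological embedding. -/

import Mathlib

open Set Topology

/-- The lower powerspace: closed subsets of `X`. -/
def LowerPS (X : Type*) [TopologicalSpace X] : Type _ := {A : Set X // IsClosed A}

/-- Lower Vietoris topology, generated by the sets `◇U = {A | A ∩ U ≠ ∅}` for `U` open. -/
instance (X : Type*) [TopologicalSpace X] : TopologicalSpace (LowerPS X) :=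
  .generateFrom {S | ∃ U : Set X, IsOpen U ∧ S = {A : LowerPS X | (A.1 ∩ U).Nonempty}}

/-- The upper powerspace: compact saturated subsets of `X`
(saturated = intersection of all open neighborhoods). -/
def UpperPS (X : Type*) [TopologicalSpace X] : Type _ :=
  {K : Set X // IsCompact K ∧ K = ⋂₀ {U : Set X | IsOpen U ∧ K ⊆ U}}

/-- Upper Vietoris topology, generated by the sets `□U = {K | K ⊆ U}` for `U` open. -/
instance (X : Type*) [TopologicalSpace X] : TopologicalSpace (UpperPS X) :=
  .generateFrom {S | ∃ U : Set X, IsOpen U ∧ S = {K : UpperPS X | K.1 ⊆ U}}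

/-- A `Π⁰₂` subset. -/
def IsPi02 {Y : Type*} [TopologicalSpace Y] (S : Set Y) : Prop :=
  ∃ U V : ℕ → Set Y, (∀ i, IsOpen (U i)) ∧ (∀ i, IsOpen (V i)) ∧
    ∀ y, y ∈ S ↔ ∀ i, y ∈ U i → y ∈ V i

/-- The Scott topology on `P(ω)`, generated by the sets `{x | F ⊆ x}` for finite `F`. -/
instance : TopologicalSpace (Set ℕ) :=
  .generateFrom {S | ∃ F : Finset ℕ, S = {x : Set ℕ | ↑F ⊆ x}}

/-- A space is quasi-Polish iff it is homeomorphic to a `Π⁰₂` subspace of `P(ω)`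
with the Scott topology. -/
def QuasiPolish (X : Type*) [TopologicalSpace X] : Prop :=
  ∃ S : Set (Set ℕ), IsPi02 S ∧ Nonempty (X ≃ₜ S)

/-- Scott-open subsets of a preorder. -/
def IsScottOpen {α : Type*} [Preorder α] (U : Set α) : Prop :=
  (∀ ⦃a b : α⦄, a ≤ b → a ∈ U → b ∈ U) ∧
  ∀ d : Set α, d.Nonempty → DirectedOn (· ≤ ·) d → ∀ a : α, IsLUB d a → a ∈ U →
    (d ∩ U).Nonempty

/-- The Scott topology on a preorder. -/
def scottTop (α : Type*) [Preorder α] : TopologicalSpace α := .generateFrom {U | IsScottOpen U}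

/-- The frame of open subsets of `X`, ordered by inclusion. -/
def OpensT (X : Type*) [TopologicalSpace X] : Type _ := {U : Set X // IsOpen U}

instance (X : Type*) [TopologicalSpace X] : PartialOrder (OpensT X) :=
  inferInstanceAs (PartialOrder {U : Set X // IsOpen U})

/-- `O(X)` carries the Scott topology. -/
instance (X : Type*) [TopologicalSpace X] : TopologicalSpace (OpensT X) := scottTop (OpensT X)

/-- `□◇U` in `K(A(X))`. -/
def boxDia {X : Type*} [TopologicalSpace X] (U : Set X) : Set (UpperPS (LowerPS X)) :=
  {𝒦 | ∀ A ∈ 𝒦.1, ((A : LowerPS X).1 ∩ U).Nonempty}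

/-- `◇□U` in `A(K(X))`. -/
def diaBox {X : Type*} [TopologicalSpace X] (U : Set X) : Set (LowerPS (UpperPS X)) :=
  {𝒜 | ∃ K ∈ 𝒜.1, (K : UpperPS X).1 ⊆ U}

/-- A space is consonant iff every Scott-open family of opens containing `U` contains
a compact-saturated filter neighborhood `▽K` of `U`. -/
def Consonant (X : Type*) [TopologicalSpace X] : Prop :=
  ∀ H : Set (OpensT X), IsScottOpen H → ∀ U ∈ H,
    ∃ K : UpperPS X, K.1 ⊆ U.1 ∧ ∀ V : OpensT X, K.1 ⊆ V.1 → V ∈ H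

/-- A space is co-consonant. -/
def CoConsonant (Y : Type*) [TopologicalSpace Y] : Prop :=
  ∀ H : Set (OpensT Y), IsScottOpen H → ∀ U ∈ H,
    ∃ F : Finset (Set Y), (∀ A ∈ F, IsClosed A) ∧ (∀ A ∈ F, (U.1 ∩ A).Nonempty) ∧
      ∀ V : OpensT Y, (∀ A ∈ F, (V.1 ∩ A).Nonempty) → V ∈ H


section SigmaAux

open TopologicalSpace

variable {X : Type*} [TopologicalSpace X]

/-- `◇U` as a subset of the lower powerspace of any space. -/
def diaS {Y : Type*} [TopologicalSpace Y] (V : Set Y) : Set (LowerPS Y) :=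
  {A | (A.1 ∩ V).Nonempty}

/-- `□U` as a subset of the upper powerspace of any space. -/
def boxS {Y : Type*} [TopologicalSpace Y] (V : Set Y) : Set (UpperPS Y) :=
  {K | K.1 ⊆ V}

lemma isOpen_diaS {Y : Type*} [TopologicalSpace Y] {V : Set Y} (hV : IsOpen V) :
    IsOpen (diaS V) :=
  isOpen_generateFrom_of_mem ⟨V, hV, rfl⟩

lemma isOpen_boxS {Y : Type*} [TopologicalSpace Y] {V : Set Y} (hV : IsOpen V) :
    IsOpen (boxS V) :=
  isOpen_generateFrom_of_mem ⟨V, hV, rfl⟩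

/-- The underlying set of `σ(𝒜)`. -/
def sigSet (𝒜 : LowerPS (UpperPS X)) : Set (LowerPS X) :=
  {A | ∀ K ∈ 𝒜.1, (A.1 ∩ (K : UpperPS X).1).Nonempty}

lemma sig_subset_dia_iff (𝒜 : LowerPS (UpperPS X)) {U : Set X} (hU : IsOpen U) :
    sigSet 𝒜 ⊆ diaS U ↔ ∃ K ∈ 𝒜.1, (K : UpperPS X).1 ⊆ U := by
  constructor
  · intro h
    by_contra hc
    push_neg at hc
    have hmem : (⟨Uᶜ, hU.isClosed_compl⟩ : LowerPS X) ∈ sigSet 𝒜 := by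
      intro K hK
      obtain ⟨x, hxK, hxU⟩ := not_subset.1 (hc K hK)
      exact ⟨x, hxU, hxK⟩
    obtain ⟨x, hx1, hx2⟩ := h hmem
    exact hx1 hx2
  · rintro ⟨K, hK, hKU⟩ A hA
    obtain ⟨x, hxA, hxK⟩ := hA K hK
    exact ⟨x, hxA, hKU hxK⟩

lemma sig_saturated (𝒜 : LowerPS (UpperPS X)) :
    sigSet 𝒜 = ⋂₀ {U : Set (LowerPS X) | IsOpen U ∧ sigSet 𝒜 ⊆ U} := by
  refine Subset.antisymm (fun A hA W hW => hW.2 hA) ?_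
  intro B hB
  by_contra hc
  simp only [sigSet, mem_setOf_eq] at hc
  push_neg at hc
  obtain ⟨K, hK, hBK⟩ := hc
  have hKBc : (K : UpperPS X).1 ⊆ (B.1)ᶜ := fun x hx hxB =>
    (eq_empty_iff_forall_notMem.1 hBK x) ⟨hxB, hx⟩
  have hsub : sigSet 𝒜 ⊆ diaS (B.1)ᶜ := by
    intro A hA
    obtain ⟨x, hxA, hxK⟩ := hA K hK
    exact ⟨x, hxA, hKBc hxK⟩
  obtain ⟨x, hxB, hxBc⟩ := hB _ ⟨isOpen_diaS B.2.isOpen_compl, hsub⟩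
  exact hxBc hxB

lemma sig_compact (𝒜 : LowerPS (UpperPS X)) : IsCompact (sigSet 𝒜) := by
  rw [isCompact_iff_ultrafilter_le_nhds]
  intro f hf
  rw [Filter.le_principal_iff] at hf
  set A0 : Set X := {x | ∀ U : Set X, IsOpen U → x ∈ U → diaS U ∈ f} with hA0
  have hA0closed : IsClosed A0 := by
    rw [← isOpen_compl_iff, isOpen_iff_forall_mem_open]
    intro x hx
    simp only [mem_compl_iff, hA0, mem_setOf_eq] at hx
    push_neg at hx
    obtain ⟨U, hUo, hxU, hUf⟩ := hx
    exact ⟨U, fun y hy hyA => hUf (hyA U hUo hy), hUo, hxU⟩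
  refine ⟨⟨A0, hA0closed⟩, ?_, ?_⟩
  · -- `A0 ∈ σ(𝒜)`
    intro K hK
    by_contra hAK
    rw [not_nonempty_iff_eq_empty] at hAK
    have hpt : ∀ x ∈ (K : UpperPS X).1, ∃ U : Set X, IsOpen U ∧ x ∈ U ∧ diaS U ∉ f := by
      intro x hx
      have hxA : x ∉ A0 := fun h => (eq_empty_iff_forall_notMem.1 hAK x) ⟨h, hx⟩
      simp only [hA0, mem_setOf_eq] at hxA
      push_neg at hxA
      exact hxA
    choose! U hUo hxU hUf using hpt
    have hcov : (K : UpperPS X).1 ⊆ ⋃ x ∈ (K : UpperPS X).1, U x :=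
      fun x hx => mem_biUnion hx (hxU x hx)
    obtain ⟨b, hbK, hbfin, hbcov⟩ :=
      (K : UpperPS X).2.1.elim_finite_subcover_image (fun x hx => hUo x hx) hcov
    have hinter : (sigSet 𝒜 ∩ ⋂ x ∈ b, (diaS (U x))ᶜ) ∈ f := by
      refine Filter.inter_mem hf ((Filter.biInter_mem hbfin).2 fun x hxb => ?_)
      exact Ultrafilter.compl_mem_iff_notMem.2 (hUf x (hbK hxb))
    obtain ⟨A, hA1, hA2⟩ := Filter.nonempty_of_mem hinter
    obtain ⟨y, hyA, hyK⟩ := hA1 K hK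
    obtain ⟨x, hxb, hyU⟩ := mem_iUnion₂.1 (hbcov hyK)
    have := mem_iInter₂.1 hA2 x hxb
    exact this ⟨y, hyA, hyU⟩
  · -- convergence
    have : (f : Filter (LowerPS X)) ≤
        @nhds _ (generateFrom
          {S | ∃ U : Set X, IsOpen U ∧ S = {A : LowerPS X | (A.1 ∩ U).Nonempty}})
          ⟨A0, hA0closed⟩ := by
      refine le_of_le_of_eq ?_ (nhds_generateFrom (α := LowerPS X)).symm
      refine le_iInf₂ fun s hs => ?_
      obtain ⟨hmem, U, hUo, rfl⟩ := hs
      obtain ⟨x, hxA, hxU⟩ := hmem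
      exact Filter.le_principal_iff.2 (hxA U hUo hxU)
    exact this

lemma box_basis {𝒱 : Set (UpperPS X)} (h : IsOpen 𝒱) :
    ∀ K ∈ 𝒱, ∃ U : Set X, IsOpen U ∧ (K : UpperPS X).1 ⊆ U ∧ boxS U ⊆ 𝒱 := by
  have h' : GenerateOpen
      {S | ∃ U : Set X, IsOpen U ∧ S = {K : UpperPS X | K.1 ⊆ U}} 𝒱 := h
  clear h
  induction h' with
  | basic s hs =>
    obtain ⟨U, hU, rfl⟩ := hs
    exact fun K hK => ⟨U, hU, hK, fun K' hK' => hK'⟩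
  | univ => exact fun K _ => ⟨univ, isOpen_univ, subset_univ _, fun _ _ => mem_univ _⟩
  | inter s t _ _ ihs iht =>
    intro K hK
    obtain ⟨U, hU, hKU, hUs⟩ := ihs K hK.1
    obtain ⟨V, hV, hKV, hVt⟩ := iht K hK.2
    exact ⟨U ∩ V, hU.inter hV, subset_inter hKU hKV,
      fun K' hK' => ⟨hUs fun x hx => (hK' hx).1, hVt fun x hx => (hK' hx).2⟩⟩
  | sUnion S _ ih =>
    rintro K ⟨t, htS, hKt⟩
    obtain ⟨U, hU, hKU, hUt⟩ := ih t htS K hKt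
    exact ⟨U, hU, hKU, fun K' hK' => ⟨t, htS, hUt hK'⟩⟩

lemma dia_basis {𝒰 : Set (LowerPS X)} (h : IsOpen 𝒰) :
    ∀ A ∈ 𝒰, ∃ G : Set (Set X), G.Finite ∧ (∀ U ∈ G, IsOpen U) ∧
      (∀ U ∈ G, ((A : LowerPS X).1 ∩ U).Nonempty) ∧
      ∀ B : LowerPS X, (∀ U ∈ G, (B.1 ∩ U).Nonempty) → B ∈ 𝒰 := by
  have h' : GenerateOpen
      {S | ∃ U : Set X, IsOpen U ∧ S = {A : LowerPS X | (A.1 ∩ U).Nonempty}} 𝒰 := h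
  clear h
  induction h' with
  | basic s hs =>
    obtain ⟨U, hU, rfl⟩ := hs
    intro A hA
    refine ⟨{U}, finite_singleton _, ?_, ?_, ?_⟩
    · rintro V rfl; exact hU
    · rintro V rfl; exact hA
    · intro B hB; exact hB U rfl
  | univ => exact fun A _ => ⟨∅, finite_empty, fun U h => h.elim, fun U h => h.elim,
      fun B _ => mem_univ _⟩
  | inter s t _ _ ihs iht =>
    intro A hA
    obtain ⟨G₁, hf₁, ho₁, hm₁, hs₁⟩ := ihs A hA.1
    obtain ⟨G₂, hf₂, ho₂, hm₂, hs₂⟩ := iht A hA.2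
    refine ⟨G₁ ∪ G₂, hf₁.union hf₂, ?_, ?_, ?_⟩
    · rintro U (hU | hU); exacts [ho₁ U hU, ho₂ U hU]
    · rintro U (hU | hU); exacts [hm₁ U hU, hm₂ U hU]
    · intro B hB
      exact ⟨hs₁ B fun U hU => hB U (Or.inl hU), hs₂ B fun U hU => hB U (Or.inr hU)⟩
  | sUnion S _ ih =>
    rintro A ⟨t, htS, hAt⟩
    obtain ⟨G, hf, ho, hm, hs⟩ := ih t htS A hAt
    exact ⟨G, hf, ho, hm, fun B hB => ⟨t, htS, hs B hB⟩⟩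

lemma sig_preimage_box_open {𝒰 : Set (LowerPS X)} (h𝒰 : IsOpen 𝒰) :
    IsOpen {𝒜 : LowerPS (UpperPS X) | sigSet 𝒜 ⊆ 𝒰} := by
  rw [isOpen_iff_forall_mem_open]
  intro 𝒜 h𝒜
  choose! G hGfin hGopen hGmeet hGsub using fun (A : LowerPS X) (hA : A ∈ sigSet 𝒜) =>
    dia_basis h𝒰 A (h𝒜 hA)
  -- the basic open neighborhoods of compact `sigSet 𝒜`
  set c : LowerPS X → Set (LowerPS X) :=
    fun A => {B | ∀ U ∈ G A, (B.1 ∩ U).Nonempty} with hc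
  have hcopen : ∀ i : sigSet 𝒜, IsOpen (c i.1) := by
    rintro ⟨A, hA⟩
    have : c A = ⋂ U ∈ G A, diaS U := by
      ext B; simp [hc, diaS, mem_iInter₂]
    rw [this]
    exact (hGfin A hA).isOpen_biInter fun U hU => isOpen_diaS (hGopen A hA U hU)
  have hcov : sigSet 𝒜 ⊆ ⋃ i : sigSet 𝒜, c i.1 := fun A hA =>
    mem_iUnion.2 ⟨⟨A, hA⟩, fun U hU => hGmeet A hA U hU⟩
  obtain ⟨t, ht⟩ := (sig_compact 𝒜).elim_finite_subcover _ hcopen hcov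
  -- choice functions over the finitely many finite families
  haveI : ∀ i : {i : sigSet 𝒜 // i ∈ t}, Finite {U : Set X // U ∈ G i.1.1} :=
    fun i => (hGfin i.1.1 i.1.2).to_subtype
  set W : Set (LowerPS (UpperPS X)) :=
    ⋂ g : ∀ i : {i : sigSet 𝒜 // i ∈ t}, {U : Set X // U ∈ G i.1.1},
      diaS (boxS (⋃ i, (g i).1)) with hW
  have hVopen : ∀ g : ∀ i : {i : sigSet 𝒜 // i ∈ t}, {U : Set X // U ∈ G i.1.1},
      IsOpen (⋃ i, (g i).1) :=
    fun g => isOpen_iUnion fun i => hGopen i.1.1 i.1.2 (g i).1 (g i).2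
  refine ⟨W, ?_, ?_, ?_⟩
  · -- W ⊆ preimage
    intro ℬ hℬ A hA
    have hex : ∃ i : {i : sigSet 𝒜 // i ∈ t}, ∀ U ∈ G i.1.1, (A.1 ∩ U).Nonempty := by
      by_contra hno
      push_neg at hno
      have hch : ∀ i : {i : sigSet 𝒜 // i ∈ t},
          ∃ U : {U : Set X // U ∈ G i.1.1}, ¬(A.1 ∩ U.1).Nonempty := by
        intro i
        obtain ⟨U, hU, hUne⟩ := hno i
        exact ⟨⟨U, hU⟩, not_nonempty_iff_eq_empty.2 hUne⟩
      choose g hg using hch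
      obtain ⟨K, hKB, hKV⟩ := mem_iInter.1 hℬ g
      obtain ⟨y, hyA, hyK⟩ := hA K hKB
      obtain ⟨i, hyU⟩ := mem_iUnion.1 (hKV hyK)
      exact hg i ⟨y, hyA, hyU⟩
    obtain ⟨i, hi⟩ := hex
    exact hGsub i.1.1 i.1.2 A hi
  · exact isOpen_iInter_of_finite fun g => isOpen_diaS (isOpen_boxS (hVopen g))
  · -- 𝒜 ∈ W
    refine mem_iInter.2 fun g => ?_
    have hsub : sigSet 𝒜 ⊆ diaS (⋃ i, (g i).1) := by
      intro A hA
      obtain ⟨i, hit, hAc⟩ := mem_iUnion₂.1 (ht hA)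
      obtain ⟨x, hx1, hx2⟩ := hAc (g ⟨i, hit⟩).1 (g ⟨i, hit⟩).2
      exact ⟨x, hx1, mem_iUnion.2 ⟨⟨i, hit⟩, hx2⟩⟩
    obtain ⟨K, hK, hKV⟩ := (sig_subset_dia_iff 𝒜 (hVopen g)).1 hsub
    exact ⟨K, hK, hKV⟩

/-- The map `σ`. -/
def sigmaMap (𝒜 : LowerPS (UpperPS X)) : UpperPS (LowerPS X) :=
  ⟨sigSet 𝒜, sig_compact 𝒜, sig_saturated 𝒜⟩

lemma sigmaMap_continuous : Continuous (sigmaMap (X := X)) := by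
  apply continuous_generateFrom_iff.mpr
  rintro s ⟨𝒰, h𝒰, rfl⟩
  exact sig_preimage_box_open h𝒰

end SigmaAux

/-- The map `σ : A(K(X)) → K(A(X))`, `σ(𝒜) = {A closed | ∀ K ∈ 𝒜, A ∩ K ≠ ∅}`, is
well-defined, satisfies `σ⁻¹(□◇U) = ◇□U` for all open `U`, and is a topological
embedding. -/
theorem sigma_embedding (X : Type*) [TopologicalSpace X] :
    ∃ σ : LowerPS (UpperPS X) → UpperPS (LowerPS X),
      (∀ 𝒜, (σ 𝒜).1 = {A : LowerPS X | ∀ K ∈ 𝒜.1, (A.1 ∩ (K : UpperPS X).1).Nonempty}) ∧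
      (∀ U : Set X, IsOpen U → σ ⁻¹' boxDia U = diaBox U) ∧
      Topology.IsEmbedding σ := by
  classical
  refine ⟨sigmaMap, fun 𝒜 => rfl, ?_, ?_, ?_⟩
  · -- σ⁻¹(□◇U) = ◇□U
    intro U hU
    ext 𝒜
    show (∀ A ∈ sigSet 𝒜, (A.1 ∩ U).Nonempty) ↔ _
    constructor
    · intro h
      exact (sig_subset_dia_iff 𝒜 hU).1 fun A hA => h A hA
    · intro h A hA
      exact (sig_subset_dia_iff 𝒜 hU).2 h hA
  · -- inducing
    constructor
    refine le_antisymm (continuous_iff_le_induced.1 sigmaMap_continuous)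
      (TopologicalSpace.le_generateFrom_iff_subset_isOpen.2 ?_)
    rintro s ⟨𝒱, h𝒱, rfl⟩
    refine isOpen_induced_iff.2
      ⟨⋃ U ∈ {U : Set X | IsOpen U ∧ boxS U ⊆ 𝒱}, boxDia U, ?_, ?_⟩
    · refine isOpen_biUnion fun U hU => ?_
      have : boxDia U = boxS (diaS U) := rfl
      rw [this]
      exact isOpen_boxS (isOpen_diaS hU.1)
    · ext 𝒜
      simp only [mem_preimage, mem_iUnion, mem_setOf_eq]
      constructor
      · rintro ⟨U, ⟨hUo, hUV⟩, hmem⟩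
        have : ∀ A ∈ sigSet 𝒜, (A.1 ∩ U).Nonempty := hmem
        obtain ⟨K, hK, hKU⟩ := (sig_subset_dia_iff 𝒜 hUo).1 fun A hA => this A hA
        exact ⟨K, hK, hUV hKU⟩
      · rintro ⟨K, hK, hKV⟩
        obtain ⟨U, hUo, hKU, hUV⟩ := box_basis h𝒱 K hKV
        refine ⟨U, ⟨hUo, hUV⟩, ?_⟩
        show ∀ A ∈ sigSet 𝒜, (A.1 ∩ U).Nonempty
        exact fun A hA => (sig_subset_dia_iff 𝒜 hUo).2 ⟨K, hK, hKU⟩ hA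
  · -- injective
    intro 𝒜 ℬ h
    have hs : sigSet 𝒜 = sigSet ℬ := congrArg Subtype.val h
    have key : ∀ 𝒜 ℬ : LowerPS (UpperPS X), sigSet 𝒜 = sigSet ℬ → ℬ.1 ⊆ 𝒜.1 := by
      intro 𝒜 ℬ hs K hK
      by_contra hKA
      obtain ⟨U, hUo, hKU, hUA⟩ := box_basis 𝒜.2.isOpen_compl K hKA
      have hUc : (⟨Uᶜ, hUo.isClosed_compl⟩ : LowerPS X) ∈ sigSet 𝒜 := by
        intro K' hK'
        obtain ⟨x, hxK', hxU⟩ := not_subset.1 fun hsub => hUA hsub hK'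
        exact ⟨x, hxU, hxK'⟩
      rw [hs] at hUc
      obtain ⟨x, hx1, hx2⟩ := hUc K hK
      exact hx1 (hKU hx2)
    exact Subtype.ext (Subset.antisymm (key ℬ 𝒜 hs.symm) (key 𝒜 ℬ hs))
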